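/- For all integers n ≥ 0 and k ≥ 1, the determinant of the n×n matrix over ℚ(q) with entries c(i+k+1, j+k), 0 ≤ i, j ≤ n-1, equals ([k]/[2n+k])·[2n+k choose n]·( (-q^{n+1}; q)_{k-1} / (-q; q)_{k-1} ), where c(a, b) = q^{(a-b)(a-b-1)} · ( (-q^{b}; q)_{a-b} / (-q; q)_{a-b} ) · [b choose a-b] for 0 ≤ a-b ≤ b, and c(a, b) = 0 when a-b < 0 (so the (i,j) entry is q^{(i-j+1)(i-j)} · ( (-q^{j+k}; q)_{i-j+1} / (-q; q)_{i-j+1} ) · [j+k choose i-j+1] for j ≤ i+1 and 0 for j > i+1). -/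

import Mathlib

/-- The indeterminate `q` in the field `ℚ(q)` of rational functions. -/
noncomputable def qq : RatFunc ℚ := RatFunc.X

/-- The `q`-integer `[n] = 1 + q + ⋯ + q^{n-1}`. -/
noncomputable def qInt (n : ℕ) : RatFunc ℚ := ∑ i ∈ Finset.range n, qq ^ i

/-- The `q`-factorial `[n]! = [1][2]⋯[n]`. -/
noncomputable def qFact (n : ℕ) : RatFunc ℚ := ∏ i ∈ Finset.range n, qInt (i + 1)

/-- The Gaussian `q`-binomial coefficient `[a choose b] = [a]!/([b]![a-b]!)` for `b ≤ a`,
and `0` for `b > a`. -/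
noncomputable def qChoose (a b : ℕ) : RatFunc ℚ :=
  if b ≤ a then qFact a / (qFact b * qFact (a - b)) else 0

/-- The `q`-Pochhammer symbol `(a; q)_n = (1-a)(1-aq)⋯(1-aq^{n-1})`. -/
noncomputable def qPoch (a : RatFunc ℚ) (n : ℕ) : RatFunc ℚ :=
  ∏ i ∈ Finset.range n, (1 - a * qq ^ i)

noncomputable def E (a : ℕ) : RatFunc ℚ := 1 - qq ^ a
noncomputable def F (a : ℕ) : RatFunc ℚ := 1 + qq ^ a
noncomputable def PE (s t : ℕ) : RatFunc ℚ := ∏ i ∈ Finset.range t, E (s + i)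
noncomputable def PF (s t : ℕ) : RatFunc ℚ := ∏ i ∈ Finset.range t, F (s + i)

lemma E_ne_zero {a : ℕ} (ha : 1 ≤ a) : E a ≠ 0 := by
  have h : E a = algebraMap (Polynomial ℚ) (RatFunc ℚ) (1 - Polynomial.X ^ a) := by
    simp [E, qq, map_sub, map_pow, RatFunc.algebraMap_X]
  rw [h]
  apply RatFunc.algebraMap_ne_zero
  rw [sub_ne_zero]
  intro hc
  have := congrArg Polynomial.natDegree hc
  rw [Polynomial.natDegree_one, Polynomial.natDegree_X_pow] at this
  omega

lemma F_ne_zero (a : ℕ) : F a ≠ 0 := by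
  rcases Nat.eq_zero_or_pos a with rfl | ha
  · simp only [F, pow_zero]
    have h : (1 + 1 : RatFunc ℚ) = algebraMap (Polynomial ℚ) (RatFunc ℚ) 2 := by
      rw [map_ofNat]; norm_num
    rw [h]
    exact RatFunc.algebraMap_ne_zero (by norm_num)
  · have h : F a = algebraMap (Polynomial ℚ) (RatFunc ℚ) (1 + Polynomial.X ^ a) := by
      simp [F, qq, map_add, map_pow, RatFunc.algebraMap_X]
    rw [h]
    apply RatFunc.algebraMap_ne_zero
    intro hc
    have h2 : (Polynomial.X : Polynomial ℚ) ^ a = -1 := by linear_combination hc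
    have := congrArg Polynomial.natDegree h2
    rw [Polynomial.natDegree_X_pow] at this
    simp at this
    omega

lemma E_zero : E 0 = 0 := by simp [E]

lemma PE_ne_zero {s : ℕ} (t : ℕ) (hs : 1 ≤ s) : PE s t ≠ 0 :=
  Finset.prod_ne_zero_iff.mpr fun i _ => E_ne_zero (by omega)

lemma PF_ne_zero (s t : ℕ) : PF s t ≠ 0 :=
  Finset.prod_ne_zero_iff.mpr fun i _ => F_ne_zero _

lemma PE_add (s a b : ℕ) : PE s (a + b) = PE s a * PE (s + a) b := by
  simp only [PE, Finset.prod_range_add, add_assoc]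

lemma PF_add (s a b : ℕ) : PF s (a + b) = PF s a * PF (s + a) b := by
  simp only [PF, Finset.prod_range_add, add_assoc]

lemma PE_zero (s : ℕ) : PE s 0 = 1 := by simp [PE]
lemma PF_zero (s : ℕ) : PF s 0 = 1 := by simp [PF]
lemma PE_one (s : ℕ) : PE s 1 = E s := by simp [PE]
lemma PF_one (s : ℕ) : PF s 1 = F s := by simp [PF]

lemma E_two (a : ℕ) : E (2 * a) = E a * F a := by
  simp only [E, F, two_mul, pow_add]; ring

lemma E_one_mul_qInt (m : ℕ) : E 1 * qInt m = E m := by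
  have h := geom_sum_mul qq m
  simp only [E, qInt, pow_one]
  linear_combination -h

lemma qInt_ne_zero {m : ℕ} (hm : 1 ≤ m) : qInt m ≠ 0 := by
  intro h
  have := E_one_mul_qInt m
  rw [h, mul_zero] at this
  exact E_ne_zero hm this.symm

lemma qFact_ne_zero (m : ℕ) : qFact m ≠ 0 :=
  Finset.prod_ne_zero_iff.mpr fun i _ => qInt_ne_zero (by omega)

lemma qFact_eq (m : ℕ) : E 1 ^ m * qFact m = PE 1 m := by
  induction m with
  | zero => simp [qFact, PE]
  | succ m ih =>
    have h2 : PE 1 (m + 1) = PE 1 m * E (m + 1) := by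
      rw [PE, Finset.prod_range_succ, ← PE, show 1 + m = m + 1 from by omega]
    rw [qFact, Finset.prod_range_succ, ← qFact, h2, ← ih, ← E_one_mul_qInt (m + 1)]
    ring

lemma qChoose_eq {a b : ℕ} (h : b ≤ a) : qChoose a b = PE (a - b + 1) b / PE 1 b := by
  rw [qChoose, if_pos h,
    div_eq_div_iff (mul_ne_zero (qFact_ne_zero b) (qFact_ne_zero (a - b))) (PE_ne_zero b le_rfl)]
  have hE1 : E 1 ≠ 0 := E_ne_zero le_rfl
  apply mul_left_cancel₀ (pow_ne_zero a hE1)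
  have ha := qFact_eq a
  have hb := qFact_eq b
  have hab := qFact_eq (a - b)
  have hpow : E 1 ^ a = E 1 ^ (a - b) * E 1 ^ b := by
    rw [← pow_add]; congr 1; omega
  have hsplit : PE 1 a = PE 1 (a - b) * PE (a - b + 1) b := by
    have := PE_add 1 (a - b) b
    rw [show (a - b) + b = a from by omega, show 1 + (a - b) = a - b + 1 from by omega] at this
    exact this
  calc E 1 ^ a * (qFact a * PE 1 b) = (E 1 ^ a * qFact a) * PE 1 b := by ring
    _ = PE 1 a * PE 1 b := by rw [ha]
    _ = (PE 1 (a - b) * PE (a - b + 1) b) * PE 1 b := by rw [hsplit]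
    _ = PE (a - b + 1) b * ((E 1 ^ b * qFact b) * (E 1 ^ (a - b) * qFact (a - b))) := by
        rw [hb, hab]; ring
    _ = E 1 ^ a * (PE (a - b + 1) b * (qFact b * qFact (a - b))) := by rw [hpow]; ring

lemma qPoch_eq (s t : ℕ) : qPoch (-qq ^ s) t = PF s t := by
  refine Finset.prod_congr rfl fun i _ => ?_
  simp only [F, pow_add]; ring

lemma qPoch_one_eq (t : ℕ) : qPoch (-qq) t = PF 1 t := by
  rw [show (-qq) = -qq ^ 1 from by rw [pow_one], qPoch_eq]

lemma qInt_mul_E (a b : ℕ) : qInt a * E b = E a * qInt b := by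
  rw [← E_one_mul_qInt a, ← E_one_mul_qInt b]; ring

lemma qInt_div_qInt {a b : ℕ} (hb : 1 ≤ b) : qInt a / qInt b = E a / E b := by
  rw [div_eq_div_iff (qInt_ne_zero hb) (E_ne_zero hb)]
  linear_combination qInt_mul_E a b

noncomputable def cF (a b : ℕ) : RatFunc ℚ :=
  if b ≤ a then
    qq ^ ((a - b) * (a - b - 1)) * (qPoch (-qq ^ b) (a - b) / qPoch (-qq) (a - b)) *
      qChoose b (a - b)
  else 0

noncomputable def Rc (n k : ℕ) : RatFunc ℚ :=
  (qInt k / qInt (2 * n + k)) * qChoose (2 * n + k) n *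
    (qPoch (-qq ^ (n + 1)) (k - 1) / qPoch (-qq) (k - 1))

noncomputable def gI (n k M : ℕ) : RatFunc ℚ :=
  qq ^ (M * (M + 1)) * Rc n k * (PE (k - M) M * PE (n - M) M * PF (n - M) M) /
    (PE 1 M * PF 1 M * PE (2 * n + k - M) M)

lemma Rc_eq (n : ℕ) {k : ℕ} (hk : 1 ≤ k) :
    Rc n k = (E k / E (2 * n + k)) * (PE (n + k + 1) n / PE 1 n) *
      (PF (n + 1) (k - 1) / PF 1 (k - 1)) := by
  rw [Rc, qInt_div_qInt (by omega), qChoose_eq (by omega : n ≤ 2 * n + k),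
    show 2 * n + k - n + 1 = n + k + 1 from by omega, qPoch_eq, qPoch_one_eq]

lemma gI_zero (n k : ℕ) : gI n k 0 = Rc n k := by
  simp [gI, PE_zero, PF_zero]

lemma cF_eq {k M : ℕ} (h : M + 1 ≤ k) :
    cF (k + M + 1) k = qq ^ (M * (M + 1)) * (PF k (M + 1) / PF 1 (M + 1)) *
      (PE (k - M) (M + 1) / PE 1 (M + 1)) := by
  rw [cF, if_pos (by omega), show k + M + 1 - k = M + 1 from by omega,
    show M + 1 - 1 = M from by omega, qPoch_eq, qPoch_one_eq,
    qChoose_eq (by omega : M + 1 ≤ k), show k - (M + 1) + 1 = k - M from by omega,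
    show (M + 1) * M = M * (M + 1) from by ring]

lemma cF_zero {k M : ℕ} (h : k ≤ M) : cF (k + M + 1) k = 0 := by
  rw [cF, if_pos (by omega), show k + M + 1 - k = M + 1 from by omega, qChoose,
    if_neg (by omega : ¬ M + 1 ≤ k), mul_zero]

lemma gI_zero_of_le {n k M : ℕ} (hk : 1 ≤ k) (h : k ≤ M) : gI n k M = 0 := by
  have hPE : PE (k - M) M = 0 := by
    rw [show k - M = 0 from by omega, PE]
    apply Finset.prod_eq_zero (Finset.mem_range.mpr (show 0 < M from by omega))
    simpa using E_zero
  rw [gI, hPE]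
  simp

lemma baseId (k M : ℕ) (hk : 1 ≤ k) : cF (k + M + 1) k = gI (M + 1) k M := by
  by_cases hMk : M + 1 ≤ k
  · rw [cF_eq hMk, gI, Rc_eq (M + 1) hk,
      show M + 1 - M = 1 from by omega, show 2 * (M + 1) + k - M = M + k + 2 from by omega,
      show (M + 1) + k + 1 = M + k + 2 from by omega, show (M + 1) + 1 = M + 2 from by omega,
      show 2 * (M + 1) + k = 2 * M + k + 2 from by omega]
    have s1 : PE (k - M) (M + 1) = PE (k - M) M * E k := by
      rw [PE_add (k - M) M 1, PE_one, show k - M + M = k from by omega]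
    have s2 : PE (M + k + 2) (M + 1) = PE (M + k + 2) M * E (2 * M + k + 2) := by
      rw [PE_add (M + k + 2) M 1, PE_one, show M + k + 2 + M = 2 * M + k + 2 from by omega]
    have s3 : PF 1 (M + 1) * PF (M + 2) (k - 1) = PF 1 (k - 1) * PF k (M + 1) := by
      have a1 := PF_add 1 (M + 1) (k - 1)
      have a2 := PF_add 1 (k - 1) (M + 1)
      rw [show 1 + (M + 1) = M + 2 from by omega] at a1
      rw [show 1 + (k - 1) = k from by omega] at a2
      rw [← a1, ← a2, show M + 1 + (k - 1) = k - 1 + (M + 1) from by omega]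
    have h1 : E (2 * M + k + 2) ≠ 0 := E_ne_zero (by omega)
    have h2 : PE 1 (M + 1) ≠ 0 := PE_ne_zero _ le_rfl
    have h3 : PF 1 (M + 1) ≠ 0 := PF_ne_zero _ _
    have h4 : PF 1 (k - 1) ≠ 0 := PF_ne_zero _ _
    have h5 : PE 1 M ≠ 0 := PE_ne_zero _ le_rfl
    have h6 : PF 1 M ≠ 0 := PF_ne_zero _ _
    have h7 : PE (M + k + 2) M ≠ 0 := PE_ne_zero _ (by omega)
    rw [s1, s2]
    field_simp
    linear_combination (-(qq ^ (M * (M + 1))) * PE (k - M) M * E k) * s3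
  · rw [cF_zero (by omega), gI_zero_of_le hk (by omega)]

lemma claim2 {n k M : ℕ} (hk : M + 1 ≤ k) (hn : M + 2 ≤ n) :
    E (2 * M + 2) * E (2 * n + k - M - 1) + qq ^ (2 * M + 2) * E (k - M - 1) * E (2 * n - 2 * M - 2)
      = E (k + M + 1) * E (2 * n) := by
  obtain ⟨a, rfl⟩ : ∃ a, k = M + 1 + a := ⟨k - M - 1, by omega⟩
  obtain ⟨b, rfl⟩ : ∃ b, n = M + 2 + b := ⟨n - M - 2, by omega⟩
  rw [show 2 * (M + 2 + b) + (M + 1 + a) - M - 1 = 2 * M + 4 + 2 * b + a from by omega,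
    show M + 1 + a - M - 1 = a from by omega,
    show 2 * (M + 2 + b) - 2 * M - 2 = 2 * b + 2 from by omega,
    show M + 1 + a + M + 1 = 2 * M + 2 + a from by omega,
    show 2 * (M + 2 + b) = 2 * M + 4 + 2 * b from by omega]
  simp only [E]
  ring

lemma claim1 {n k M : ℕ} (hk : M + 1 ≤ k) (hn : M + 2 ≤ n) :
    E (2 * M + 2) * E (2 * n + k - M - 1) * gI n k (M + 1)
      = qq ^ (2 * M + 2) * E (k - M - 1) * E (2 * n - 2 * M - 2) * gI n k M := by
  have t1 : PE (k - (M + 1)) (M + 1) = E (k - M - 1) * PE (k - M) M := by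
    rw [show (M + 1) = 1 + M from by omega, PE_add, PE_one,
      show k - (1 + M) + 1 = k - M from by omega, show k - (1 + M) = k - M - 1 from by omega]
  have t2 : PE (n - (M + 1)) (M + 1) = E (n - M - 1) * PE (n - M) M := by
    rw [show (M + 1) = 1 + M from by omega, PE_add, PE_one,
      show n - (1 + M) + 1 = n - M from by omega, show n - (1 + M) = n - M - 1 from by omega]
  have t3 : PF (n - (M + 1)) (M + 1) = F (n - M - 1) * PF (n - M) M := by
    rw [show (M + 1) = 1 + M from by omega, PF_add, PF_one,
      show n - (1 + M) + 1 = n - M from by omega, show n - (1 + M) = n - M - 1 from by omega]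
  have t4 : PE (2 * n + k - (M + 1)) (M + 1) = E (2 * n + k - M - 1) * PE (2 * n + k - M) M := by
    rw [show (M + 1) = 1 + M from by omega, PE_add, PE_one,
      show 2 * n + k - (1 + M) + 1 = 2 * n + k - M from by omega,
      show 2 * n + k - (1 + M) = 2 * n + k - M - 1 from by omega]
  have t5 : E (2 * n - 2 * M - 2) = E (n - M - 1) * F (n - M - 1) := by
    rw [show 2 * n - 2 * M - 2 = 2 * (n - M - 1) from by omega, E_two]
  have s7 : E (2 * M + 2) = E (M + 1) * F (M + 1) := by
    rw [show 2 * M + 2 = 2 * (M + 1) from by omega, E_two]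
  have s8 : PE 1 (M + 1) = PE 1 M * E (M + 1) := by
    rw [PE_add 1 M 1, PE_one, show 1 + M = M + 1 from by omega]
  have s9 : PF 1 (M + 1) = PF 1 M * F (M + 1) := by
    rw [PF_add 1 M 1, PF_one, show 1 + M = M + 1 from by omega]
  have hq : qq ^ ((M + 1) * (M + 1 + 1)) = qq ^ (M * (M + 1)) * qq ^ (2 * M + 2) := by
    rw [← pow_add]; congr 1; ring
  rw [gI, gI, t1, t2, t3, t4, t5, s7, s8, s9, hq]
  have h2 : PE 1 M ≠ 0 := PE_ne_zero _ le_rfl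
  have h3 : PF 1 M ≠ 0 := PF_ne_zero _ _
  have h4 : PE (2 * n + k - M) M ≠ 0 := PE_ne_zero _ (by omega)
  have h5 : E (M + 1) ≠ 0 := E_ne_zero (by omega)
  have h6 : F (M + 1) ≠ 0 := F_ne_zero _
  have h7 : E (2 * n + k - M - 1) ≠ 0 := E_ne_zero (by omega)
  rw [mul_div_assoc', mul_div_assoc', div_eq_div_iff (by apply_rules [mul_ne_zero]) (by apply_rules [mul_ne_zero])]
  ring

lemma claim3 {n k M : ℕ} (hk : 1 ≤ k) (hMk : M + 1 ≤ k) (hn : M + 2 ≤ n) :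
    E (k + M + 1) * E (2 * n) * gI n k M
      = E (2 * M + 2) * E (2 * n + k - M - 1) * (cF (k + M + 1) k * Rc (n - M - 1) (k + M + 1)) := by
  have hRc1 : Rc n k = (E k / E (2 * n + k)) * (PE (n + k + 1) n / PE 1 n) *
      (PF (n + 1) (k - 1) / PF 1 (k - 1)) := Rc_eq n hk
  have hRc2 : Rc (n - M - 1) (k + M + 1) = (E (k + M + 1) / E (2 * n + k - M - 1)) *
      (PE (n + k + 1) (n - M - 1) / PE 1 (n - M - 1)) * (PF (n - M) (k + M) / PF 1 (k + M)) := by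
    rw [Rc_eq (n - M - 1) (by omega : 1 ≤ k + M + 1),
      show 2 * (n - M - 1) + (k + M + 1) = 2 * n + k - M - 1 from by omega,
      show n - M - 1 + (k + M + 1) + 1 = n + k + 1 from by omega,
      show n - M - 1 + 1 = n - M from by omega,
      show k + M + 1 - 1 = k + M from by omega]
  have s1 : PE (k - M) (M + 1) = PE (k - M) M * E k := by
    rw [PE_add (k - M) M 1, PE_one, show k - M + M = k from by omega]
  have s2 : PE (n + k + 1) n
      = PE (n + k + 1) (n - M - 1) * (PE (2 * n + k - M) M * E (2 * n + k)) := by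
    have a1 := PE_add (n + k + 1) (n - M - 1) (M + 1)
    rw [show n - M - 1 + (M + 1) = n from by omega,
      show n + k + 1 + (n - M - 1) = 2 * n + k - M from by omega] at a1
    have a2 := PE_add (2 * n + k - M) M 1
    rw [PE_one, show 2 * n + k - M + M = 2 * n + k from by omega] at a2
    rw [a1, a2]
  have s3 : PF (n - M) (k + M) = PF (n - M) M * (F n * PF (n + 1) (k - 1)) := by
    have b1 := PF_add (n - M) M k
    rw [show n - M + M = n from by omega] at b1
    have b2 := PF_add n 1 (k - 1)
    rw [PF_one, show 1 + (k - 1) = k from by omega] at b2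
    rw [show k + M = M + k from by omega, b1, b2, show n + 1 = n + 1 from rfl]
  have s4 : PF 1 (k + M) = PF 1 (k - 1) * PF k (M + 1) := by
    have c1 := PF_add 1 (k - 1) (M + 1)
    rw [show k - 1 + (M + 1) = k + M from by omega, show 1 + (k - 1) = k from by omega] at c1
    exact c1
  have s5 : PE 1 n = PE 1 (n - M - 1) * (PE (n - M) M * E n) := by
    have d1 := PE_add 1 (n - M - 1) (M + 1)
    rw [show n - M - 1 + (M + 1) = n from by omega,
      show 1 + (n - M - 1) = n - M from by omega] at d1
    have d2 := PE_add (n - M) M 1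
    rw [PE_one, show n - M + M = n from by omega] at d2
    rw [d1, d2]
  have s6 : E (2 * n) = E n * F n := E_two n
  have s7 : E (2 * M + 2) = E (M + 1) * F (M + 1) := by
    rw [show 2 * M + 2 = 2 * (M + 1) from by omega, E_two]
  have s8 : PE 1 (M + 1) = PE 1 M * E (M + 1) := by
    rw [PE_add 1 M 1, PE_one, show 1 + M = M + 1 from by omega]
  have s9 : PF 1 (M + 1) = PF 1 M * F (M + 1) := by
    rw [PF_add 1 M 1, PF_one, show 1 + M = M + 1 from by omega]
  rw [gI, cF_eq hMk, hRc1, hRc2, s1, s2, s3, s4, s5, s6, s7, s8, s9]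
  have h1 : E (2 * n + k) ≠ 0 := E_ne_zero (by omega)
  have h2 : E n ≠ 0 := E_ne_zero (by omega)
  have h3 : E (M + 1) ≠ 0 := E_ne_zero (by omega)
  have h4 : E (2 * n + k - M - 1) ≠ 0 := E_ne_zero (by omega)
  have h5 : PE 1 (n - M - 1) ≠ 0 := PE_ne_zero _ le_rfl
  have h6 : PE (n - M) M ≠ 0 := PE_ne_zero _ (by omega)
  have h7 : PE 1 M ≠ 0 := PE_ne_zero _ le_rfl
  have h8 : PE (2 * n + k - M) M ≠ 0 := PE_ne_zero _ (by omega)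
  have h9 : PF k (M + 1) ≠ 0 := PF_ne_zero _ _
  have h10 : PF 1 (k - 1) ≠ 0 := PF_ne_zero _ _
  have h11 : PF 1 M ≠ 0 := PF_ne_zero _ _
  have h12 : F (M + 1) ≠ 0 := F_ne_zero _
  have h13 : F n ≠ 0 := F_ne_zero _
  have h14 : PF (n - M) M ≠ 0 := PF_ne_zero _ _
  have h15 : PE (n + k + 1) (n - M - 1) ≠ 0 := PE_ne_zero _ (by omega)
  have h16 : PE (k - M) M ≠ 0 := PE_ne_zero _ (by omega)
  field_simp

lemma keyId {n k M : ℕ} (hk : 1 ≤ k) (hn : M + 2 ≤ n) :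
    gI n k M = cF (k + M + 1) k * Rc (n - M - 1) (k + M + 1) - gI n k (M + 1) := by
  by_cases hMk : M + 1 ≤ k
  · have c1 := claim1 (n := n) hMk hn
    have c2 := claim2 (n := n) hMk hn
    have c3 := claim3 (n := n) hk hMk hn
    have h1 : E (2 * M + 2) ≠ 0 := E_ne_zero (by omega)
    have h2 : E (2 * n + k - M - 1) ≠ 0 := E_ne_zero (by omega)
    have main : E (2 * M + 2) * E (2 * n + k - M - 1) * (gI n k M + gI n k (M + 1))
        = E (2 * M + 2) * E (2 * n + k - M - 1) * (cF (k + M + 1) k * Rc (n - M - 1) (k + M + 1)) := by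
      linear_combination c1 + gI n k M * c2 + c3
    have := mul_left_cancel₀ (mul_ne_zero h1 h2) main
    linear_combination this
  · have g1 : gI n k M = 0 := gI_zero_of_le hk (by omega)
    have g2 : gI n k (M + 1) = 0 := gI_zero_of_le hk (by omega)
    have c0 : cF (k + M + 1) k = 0 := cF_zero (by omega)
    rw [g1, g2, c0]
    ring

noncomputable def Bmat (N K k : ℕ) : Matrix (Fin N) (Fin N) (RatFunc ℚ) :=
  Matrix.of fun i j =>
    if (j : ℕ) = 0 then cF ((i : ℕ) + K + 1) k else cF ((i : ℕ) + K + 1) ((j : ℕ) + K)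

lemma Bmat_apply (N K k : ℕ) (i j : Fin N) :
    Bmat N K k i j
      = if (j : ℕ) = 0 then cF ((i : ℕ) + K + 1) k else cF ((i : ℕ) + K + 1) ((j : ℕ) + K) := rfl

lemma qChoose_zero (a : ℕ) : qChoose a 0 = 1 := by
  have h0 : qFact 0 = 1 := by simp [qFact]
  rw [qChoose, if_pos (Nat.zero_le a), h0, Nat.sub_zero, one_mul, div_self (qFact_ne_zero a)]

lemma cF_self (a : ℕ) : cF a a = 1 := by
  have h1 : qPoch (-qq ^ a) 0 = 1 := by simp [qPoch]
  have h2 : qPoch (-qq) 0 = 1 := by simp [qPoch]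
  rw [cF, if_pos le_rfl, Nat.sub_self, h1, h2, qChoose_zero]
  norm_num

lemma cF_big {a b : ℕ} (h : a < b) : cF a b = 0 := by
  rw [cF, if_neg (by omega)]

lemma Bmat_diag (N K : ℕ) (i j : Fin N) :
    Bmat N K K i j = cF ((i : ℕ) + K + 1) ((j : ℕ) + K) := by
  rw [Bmat_apply]
  by_cases hj : (j : ℕ) = 0
  · rw [if_pos hj, hj, Nat.zero_add]
  · rw [if_neg hj]

lemma detB (N : ℕ) : ∀ k M : ℕ, 1 ≤ k → (Bmat (N + 1) (k + M) k).det = gI (N + 1 + M) k M := by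
  induction N with
  | zero =>
    intro k M hk
    rw [Matrix.det_fin_one, Bmat_apply, if_pos (by simp : (((0 : Fin 1)) : ℕ) = 0)]
    rw [show ((0 : Fin 1) : ℕ) + (k + M) + 1 = k + M + 1 from by simp,
      show 0 + 1 + M = M + 1 from by omega]
    exact baseId k M hk
  | succ N ih =>
    intro k M hk
    set A := Bmat (N + 1 + 1) (k + M) k with hA
    have hval : ∀ j : Fin (N + 1), (((1 : Fin (N + 2)).succAbove j) : ℕ)
        = if (j : ℕ) = 0 then 0 else (j : ℕ) + 1 := by
      intro j
      rcases Nat.eq_zero_or_pos (j : ℕ) with h0 | hpos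
      · rw [if_pos h0, Fin.succAbove, if_pos (by simp [Fin.lt_def, h0])]
        simpa using h0
      · rw [if_neg (by omega), Fin.succAbove, if_neg (by simp [Fin.lt_def]; exact fun h => by simp [h] at hpos), Fin.val_succ]
    have m0 : A.submatrix Fin.succ ((0 : Fin (N + 2)).succAbove)
        = Bmat (N + 1) (k + M + 1) (k + M + 1) := by
      ext i j
      rw [Matrix.submatrix_apply, Fin.zero_succAbove, hA, Bmat_apply,
        if_neg (by rw [Fin.val_succ]; omega), Bmat_diag, Fin.val_succ, Fin.val_succ,
        show (i : ℕ) + 1 + (k + M) + 1 = (i : ℕ) + (k + M + 1) + 1 from by omega,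
        show (j : ℕ) + 1 + (k + M) = (j : ℕ) + (k + M + 1) from by omega]
    have m1 : A.submatrix Fin.succ ((1 : Fin (N + 2)).succAbove)
        = Bmat (N + 1) (k + (M + 1)) k := by
      ext i j
      rw [Matrix.submatrix_apply, hA, Bmat_apply, Bmat_apply, hval j, Fin.val_succ]
      by_cases hj : (j : ℕ) = 0
      · rw [if_pos hj, if_pos rfl, if_pos hj,
          show (i : ℕ) + 1 + (k + M) + 1 = (i : ℕ) + (k + (M + 1)) + 1 from by omega]
      · rw [if_neg hj, if_neg (by omega), if_neg hj,
          show (i : ℕ) + 1 + (k + M) + 1 = (i : ℕ) + (k + (M + 1)) + 1 from by omega,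
          show (j : ℕ) + 1 + (k + M) = (j : ℕ) + (k + (M + 1)) from by omega]
    rw [Matrix.det_succ_row_zero, Fin.sum_univ_succ, Fin.sum_univ_succ]
    have htail : ∀ j : Fin N,
        ((-1 : RatFunc ℚ) ^ ((j.succ.succ : Fin (N + 2)) : ℕ) * A 0 j.succ.succ *
          (A.submatrix Fin.succ (j.succ.succ).succAbove).det) = 0 := by
      intro j
      have hz : A 0 j.succ.succ = 0 := by
        rw [hA, Bmat_apply, if_neg (by rw [Fin.val_succ, Fin.val_succ]; omega)]
        rw [Fin.val_succ, Fin.val_succ]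
        exact cF_big (by simp; omega)
      rw [hz, mul_zero, zero_mul]
    rw [Finset.sum_eq_zero (fun j _ => htail j), add_zero]
    have hA00 : A 0 0 = cF (k + M + 1) k := by
      rw [hA, Bmat_apply, if_pos (by simp)]
      norm_num
    have hA01 : A 0 (0 : Fin (N + 1)).succ = 1 := by
      rw [hA, Bmat_apply, if_neg (by simp), Fin.val_succ]
      have e1 : ((0 : Fin (N + 1)) : ℕ) + 1 + (k + M) = k + M + 1 := by
        simp only [Fin.val_zero]
        omega
      have e2 : ((0 : Fin (N + 2)) : ℕ) + (k + M) + 1 = k + M + 1 := by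
        simp only [Fin.val_zero]
        omega
      rw [e1, e2]
      exact cF_self _
    have hsucc0 : ((0 : Fin (N + 1)).succ : Fin (N + 2)) = 1 := by
      exact Fin.succ_zero_eq_one
    rw [hA00, hA01, hsucc0, m0, m1]
    rw [ih (k + M + 1) 0 (by omega), ih k (M + 1) hk]
    rw [show k + M + 1 + 0 = k + M + 1 from by omega] at *
    rw [gI_zero]
    have hkey := keyId (n := N + 1 + 1 + M) (k := k) (M := M) hk (by omega)
    rw [show N + 1 + 1 + M - M - 1 = N + 1 from by omega] at hkey
    rw [show N + 1 + 0 = N + 1 from by omega]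
    simp only [Fin.val_zero, Fin.val_one, pow_zero, pow_one, one_mul, neg_one_mul]
    rw [show N + 1 + (M + 1) = N + 1 + 1 + M from by omega]
    linear_combination -hkey

lemma toNat_exp (i j : ℕ) (h : j ≤ i + 1) :
    ((((i : ℕ) : ℤ) - ((j : ℕ) : ℤ) + 1) * (((i : ℕ) : ℤ) - ((j : ℕ) : ℤ))).toNat
      = (i + 1 - j) * (i + 1 - j - 1) := by
  rcases Nat.lt_or_ge i j with hlt | hge
  · have hj : j = i + 1 := by omega
    subst hj
    have : ((i : ℤ) - (i + 1 : ℕ) + 1) * ((i : ℤ) - (i + 1 : ℕ)) = 0 := by push_cast; ring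
    rw [this]
    simp
  · have h1 : ((i : ℤ) - (j : ℤ)) = ((i - j : ℕ) : ℤ) := by
      rw [Nat.cast_sub hge]
    rw [h1, show (((i - j : ℕ) : ℤ) + 1) = (((i - j + 1 : ℕ)) : ℤ) from by push_cast; ring,
      ← Nat.cast_mul, Int.toNat_natCast]
    have : i + 1 - j = i - j + 1 := by omega
    rw [this, Nat.add_sub_cancel]

theorem stmt_16 (n k : ℕ) (hk : 1 ≤ k) :
    Matrix.det (Matrix.of fun i j : Fin n =>
        if (j : ℕ) ≤ (i : ℕ) + 1 then
          qq ^ ((((i : ℕ) : ℤ) - ((j : ℕ) : ℤ) + 1) * (((i : ℕ) : ℤ) - ((j : ℕ) : ℤ))).toNat *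
            (qPoch (-qq ^ ((j : ℕ) + k)) ((i : ℕ) + 1 - (j : ℕ)) /
              qPoch (-qq) ((i : ℕ) + 1 - (j : ℕ))) *
            qChoose ((j : ℕ) + k) ((i : ℕ) + 1 - (j : ℕ))
        else 0)
      = (qInt k / qInt (2 * n + k)) * qChoose (2 * n + k) n *
          (qPoch (-qq ^ (n + 1)) (k - 1) / qPoch (-qq) (k - 1)) := by
  have hmat : (Matrix.of fun i j : Fin n =>
      if (j : ℕ) ≤ (i : ℕ) + 1 then
        qq ^ ((((i : ℕ) : ℤ) - ((j : ℕ) : ℤ) + 1) * (((i : ℕ) : ℤ) - ((j : ℕ) : ℤ))).toNat *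
          (qPoch (-qq ^ ((j : ℕ) + k)) ((i : ℕ) + 1 - (j : ℕ)) /
            qPoch (-qq) ((i : ℕ) + 1 - (j : ℕ))) *
          qChoose ((j : ℕ) + k) ((i : ℕ) + 1 - (j : ℕ))
      else 0) = Bmat n k k := by
    ext i j
    rw [Matrix.of_apply, Bmat_diag]
    by_cases h : (j : ℕ) ≤ (i : ℕ) + 1
    · rw [if_pos h, cF, if_pos (by omega : (j : ℕ) + k ≤ (i : ℕ) + k + 1),
        show (i : ℕ) + k + 1 - ((j : ℕ) + k) = (i : ℕ) + 1 - (j : ℕ) from by omega,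
        toNat_exp _ _ h]
    · rw [if_neg h, cF, if_neg (by omega)]
  rw [hmat]
  rcases n with _ | N
  · rw [Matrix.det_fin_zero, show 2 * 0 + k = k from by omega, qChoose_zero,
      div_self (qInt_ne_zero hk), show (0 : ℕ) + 1 = 1 from rfl, pow_one,
      div_self (by rw [qPoch_one_eq]; exact PF_ne_zero _ _)]
    norm_num
  · have h := detB N k 0 hk
    rw [show k + 0 = k from rfl] at h
    rw [h, show N + 1 + 0 = N + 1 from rfl, gI_zero, Rc]
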